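/- Let F be a field and F⟨x,y⟩ the free associative algebra on two generators x, y over F. The F-algebra endomorphism φ of F⟨x,y⟩ defined by φ(x) = x and φ(y) = y + xy − yx is not an automorphism of F⟨x,y⟩. -/

import Mathlib

noncomputable section

/-- The endomorphism `(x, y + xy - yx)` of the free associative algebra `F⟨x,y⟩`
is not an automorphism. -/
theorem freeAlgebraNotAuto {F : Type*} [Field F]
    (φ : FreeAlgebra F (Fin 2) →ₐ[F] FreeAlgebra F (Fin 2))
    (hx : φ (FreeAlgebra.ι F 0) = FreeAlgebra.ι F 0)
    (hy : φ (FreeAlgebra.ι F 1) =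
      FreeAlgebra.ι F 1 + FreeAlgebra.ι F 0 * FreeAlgebra.ι F 1
        - FreeAlgebra.ι F 1 * FreeAlgebra.ι F 0) :
    ¬ Function.Bijective φ := by
  intro hbij
  -- matrices A = E₁₁ and B = E₀₁
  set A : Matrix (Fin 2) (Fin 2) F := Matrix.single 1 1 1 with hA
  set B : Matrix (Fin 2) (Fin 2) F := Matrix.single 0 1 1 with hB
  -- evaluation hom e : x ↦ A, y ↦ B
  set e : FreeAlgebra F (Fin 2) →ₐ[F] Matrix (Fin 2) (Fin 2) F :=
    FreeAlgebra.lift F ![A, B] with he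
  -- key matrix identities
  have hAB : A * B = 0 := by
    ext a b
    fin_cases a <;> fin_cases b <;>
      simp [hA, hB, Matrix.mul_apply, Fin.sum_univ_two, Matrix.single]
  have hBA : B * A = B := by
    ext a b
    fin_cases a <;> fin_cases b <;>
      simp [hA, hB, Matrix.mul_apply, Fin.sum_univ_two, Matrix.single]
  -- e ∘ φ sends both generators into matrices supported on the diagonal
  have key : ∀ p : FreeAlgebra F (Fin 2),
      (e (φ p)) 0 1 = 0 ∧ (e (φ p)) 1 0 = 0 := by
    intro p
    refine FreeAlgebra.induction F (Fin 2)
      (motive := fun q => (e (φ q)) 0 1 = 0 ∧ (e (φ q)) 1 0 = 0) ?_ ?_ ?_ ?_ p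
    · intro r
      simp [Matrix.algebraMap_matrix_apply]
    · intro i
      fin_cases i
      · show (e (φ (FreeAlgebra.ι F 0))) 0 1 = 0 ∧ (e (φ (FreeAlgebra.ι F 0))) 1 0 = 0
        rw [hx]
        simp only [he, FreeAlgebra.lift_ι_apply]
        simp [hA, Matrix.single, Matrix.of_apply]
      · show (e (φ (FreeAlgebra.ι F 1))) 0 1 = 0 ∧ (e (φ (FreeAlgebra.ι F 1))) 1 0 = 0
        rw [hy]
        simp only [map_sub, map_add, map_mul, he, FreeAlgebra.lift_ι_apply]
        show ((![A, B] 1 + ![A, B] 0 * ![A, B] 1 - ![A, B] 1 * ![A, B] 0) 0 1 = 0) ∧ _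
        simp only [Matrix.cons_val_zero, Matrix.cons_val_one, Matrix.head_cons]
        rw [hAB, hBA]
        simp
    · intro a b ha hb
      constructor
      · rw [map_mul, map_mul, Matrix.mul_apply, Fin.sum_univ_two, ha.1, hb.1]
        ring
      · rw [map_mul, map_mul, Matrix.mul_apply, Fin.sum_univ_two, ha.2, hb.2]
        ring
    · intro a b ha hb
      constructor
      · rw [map_add, map_add, Matrix.add_apply, ha.1, hb.1, add_zero]
      · rw [map_add, map_add, Matrix.add_apply, ha.2, hb.2, add_zero]
  -- but y is in the range of φ
  obtain ⟨p, hp⟩ := hbij.2 (FreeAlgebra.ι F 1)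
  have h01 := (key p).1
  rw [hp] at h01
  simp only [he, FreeAlgebra.lift_ι_apply] at h01
  have : B 0 1 = 0 := by simpa using h01
  rw [hB] at this
  simp [Matrix.single] at this
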